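/- Let X be a nonempty closed subset of a complete metric space (Y,d), let α, ε ≥ 0 with α + ε < 1, and let F be a multivalued mapping from X to Y with nonempty closed bounded values that is an α-contraction. Assume there exists ε₁ ∈ (0,ε) such that for each x ∈ X with x ∉ F(x) and each t ∈ F(x) there exists z ∈ X with z ≠ x and (1−ε₁) d(x,z) ≤ d(x,t) − d(z,t). Then for each x ∈ X with x ∉ F(x) and each t ∈ F(x) there exist z ∈ X with z ≠ x and v ∈ F(z) such that (1−α−ε) max{d(x,z), d(t,v)/(α+ε)} ≤ d(x,t) − d(z,v), and F has a fixed point. -/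
import Mathlib


open Metric Filter

/-- A Brøndsted/Ekeland-type minimal element lemma: a continuous nonnegative
function on a nonempty complete metric space admits a point `m` such that no other
point `z` satisfies `dist z m ≤ f m - f z`. -/
lemma exists_brondsted_minimal {T : Type*} [MetricSpace T] [CompleteSpace T] [Nonempty T]
    (f : T → ℝ) (hf : Continuous f) (h0 : ∀ p, 0 ≤ f p) :
    ∃ m : T, ∀ z : T, dist z m ≤ f m - f z → z = m := by
  have key : ∀ (n : ℕ) (u : T), ∃ u' : T, dist u' u ≤ f u - f u' ∧
      ∀ z : T, dist z u ≤ f u - f z → f u' ≤ f z + (1/2 : ℝ)^n := by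
    intro n u
    set S := {z : T | dist z u ≤ f u - f z} with hS
    have hSne : S.Nonempty := ⟨u, by simp [hS]⟩
    have himne : (f '' S).Nonempty := hSne.image f
    have hbdd : BddBelow (f '' S) := ⟨0, by rintro y ⟨w, _, rfl⟩; exact h0 w⟩
    obtain ⟨y, ⟨u', hu'S, rfl⟩, hylt⟩ :=
      Real.lt_sInf_add_pos himne (by positivity : (0:ℝ) < (1/2:ℝ)^n)
    refine ⟨u', hu'S, fun z hz => ?_⟩
    have : sInf (f '' S) ≤ f z := csInf_le hbdd ⟨z, hz, rfl⟩
    linarith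
  let u : ℕ → T := fun n => Nat.rec (Classical.arbitrary T) (fun n p => (key n p).choose) n
  have hu : ∀ n, u (n+1) = (key n (u n)).choose := fun n => rfl
  have h1 : ∀ n, dist (u (n+1)) (u n) ≤ f (u n) - f (u (n+1)) := by
    intro n; rw [hu n]; exact (key n (u n)).choose_spec.1
  have h2 : ∀ n (z : T), dist z (u n) ≤ f (u n) - f z → f (u (n+1)) ≤ f z + (1/2:ℝ)^n := by
    intro n; rw [hu n]; exact (key n (u n)).choose_spec.2
  have hchain : ∀ n m, n ≤ m → dist (u m) (u n) ≤ f (u n) - f (u m) := by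
    intro n m hnm
    induction m, hnm using Nat.le_induction with
    | base => simp
    | succ m hnm ih =>
      have := h1 m
      have htri := dist_triangle (u (m+1)) (u m) (u n)
      linarith
  have hanti : Antitone (fun n => f (u n)) := by
    apply antitone_nat_of_succ_le
    intro n
    have := h1 n
    have := dist_nonneg (x := u (n+1)) (y := u n)
    linarith
  have hbddr : BddBelow (Set.range fun n => f (u n)) :=
    ⟨0, by rintro y ⟨n, rfl⟩; exact h0 _⟩
  set L := ⨅ n, f (u n) with hLdef
  have hL : Tendsto (fun n => f (u n)) atTop (nhds L) := tendsto_atTop_ciInf hanti hbddr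
  have hLle : ∀ n, L ≤ f (u n) := fun n => ciInf_le hbddr n
  have hcauchy : CauchySeq u := by
    apply cauchySeq_of_le_tendsto_0 (fun n => f (u n) - L)
    · intro n m N hn hm
      rcases le_total n m with h | h
      · calc dist (u n) (u m) = dist (u m) (u n) := dist_comm _ _
          _ ≤ f (u n) - f (u m) := hchain n m h
          _ ≤ f (u N) - L := by
              have := hanti hn; have := hLle m; linarith
      · calc dist (u n) (u m) ≤ f (u m) - f (u n) := hchain m n h
          _ ≤ f (u N) - L := by
              have := hanti hm; have := hLle n; linarith
    · have := hL.sub_const L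
      simpa using this
  obtain ⟨m, hm⟩ := cauchySeq_tendsto_of_complete hcauchy
  have hfm : f m = L := by
    have h1' : Tendsto (fun n => f (u n)) atTop (nhds (f m)) :=
      (hf.continuousAt.tendsto).comp hm
    exact tendsto_nhds_unique h1' hL
  have hm2 : ∀ n, dist m (u n) ≤ f (u n) - f m := by
    intro n
    have hd : Tendsto (fun k => dist (u k) (u n)) atTop (nhds (dist m (u n))) :=
      hm.dist tendsto_const_nhds
    have hfc : Tendsto (fun k => f (u n) - f (u k)) atTop (nhds (f (u n) - f m)) := by
      have : Tendsto (fun k => f (u k)) atTop (nhds (f m)) := (hf.continuousAt.tendsto).comp hm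
      simpa using (tendsto_const_nhds (x := f (u n))).sub this
    refine le_of_tendsto_of_tendsto hd hfc ?_
    filter_upwards [eventually_ge_atTop n] with k hk
    exact hchain n k hk
  refine ⟨m, fun z hz => ?_⟩
  have hzn : ∀ n, dist z (u n) ≤ f (u n) - f z := by
    intro n
    have := hm2 n
    have htri := dist_triangle z m (u n)
    linarith
  have hLz : L ≤ f z := by
    have hle : ∀ n, f (u (n+1)) ≤ f z + (1/2:ℝ)^n := fun n => h2 n z (hzn n)
    have h1' : Tendsto (fun n => f (u (n+1))) atTop (nhds L) :=
      hL.comp (tendsto_add_atTop_nat 1)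
    have h2' : Tendsto (fun n : ℕ => f z + (1/2:ℝ)^n) atTop (nhds (f z)) := by
      have : Tendsto (fun n : ℕ => ((1:ℝ)/2)^n) atTop (nhds 0) := by
        apply tendsto_pow_atTop_nhds_zero_of_lt_one <;> norm_num
      simpa using (tendsto_const_nhds (x := f z)).add this
    exact le_of_tendsto_of_tendsto h1' h2' (Eventually.of_forall hle)
  have : dist z m ≤ 0 := by rw [hfm] at hz; linarith
  exact dist_le_zero.1 this

theorem fixed_point_of_strict_inward_condition
    {Y : Type*} [MetricSpace Y] [CompleteSpace Y]
    (X : Set Y) (hX : X.Nonempty) (hXcl : IsClosed X)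
    (α ε : ℝ) (hα : 0 ≤ α) (hε : 0 ≤ ε) (hαε : α + ε < 1)
    (F : X → Set Y) (hFne : ∀ x, (F x).Nonempty)
    (hFcl : ∀ x, IsClosed (F x)) (hFbdd : ∀ x, Bornology.IsBounded (F x))
    (hcontr : ∀ x y : X, hausdorffDist (F y) (F x) ≤ α * dist (y : Y) (x : Y))
    (ε₁ : ℝ) (hε₁ : 0 < ε₁) (hε₁ε : ε₁ < ε)
    (hcond : ∀ x : X, (x : Y) ∉ F x → ∀ t ∈ F x, ∃ z : X, z ≠ x ∧
      (1 - ε₁) * dist (x : Y) (z : Y) ≤ dist (x : Y) t - dist (z : Y) t) :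
    (∀ x : X, (x : Y) ∉ F x → ∀ t ∈ F x, ∃ z : X, z ≠ x ∧ ∃ v ∈ F z,
      (1 - α - ε) * max (dist (x : Y) (z : Y)) (dist t v / (α + ε)) ≤
        dist (x : Y) t - dist (z : Y) v) ∧
    ∃ x : X, (x : Y) ∈ F x := by
  have hαεpos : 0 < α + ε := by linarith
  have part1 : ∀ x : X, (x : Y) ∉ F x → ∀ t ∈ F x, ∃ z : X, z ≠ x ∧ ∃ v ∈ F z,
      (1 - α - ε) * max (dist (x : Y) (z : Y)) (dist t v / (α + ε)) ≤
        dist (x : Y) t - dist (z : Y) v := by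
    intro x hx t ht
    obtain ⟨z, hzx, hzineq⟩ := hcond x hx t ht
    have hzxY : (z : Y) ≠ (x : Y) := fun h => hzx (Subtype.ext h)
    have hd : 0 < dist (x : Y) (z : Y) := dist_pos.2 (Ne.symm hzxY)
    have hED : EMetric.hausdorffEdist (F x) (F z) ≠ ⊤ :=
      hausdorffEdist_ne_top_of_nonempty_of_bounded (hFne x) (hFne z) (hFbdd x) (hFbdd z)
    have h1 : infDist t (F z) ≤ α * dist (x : Y) (z : Y) :=
      le_trans (infDist_le_hausdorffDist_of_mem ht hED) (hcontr z x)
    have h2 : infDist t (F z) < (α + (ε - ε₁)) * dist (x : Y) (z : Y) :=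
      lt_of_le_of_lt h1 (by nlinarith)
    obtain ⟨v, hv, hvlt⟩ := (infDist_lt_iff (hFne z)).1 h2
    refine ⟨z, hzx, v, hv, ?_⟩
    have hmax : dist t v / (α + ε) ≤ dist (x : Y) (z : Y) := by
      rw [div_le_iff₀ hαεpos]
      nlinarith
    rw [max_eq_left hmax]
    have htri : dist (z : Y) v ≤ dist (z : Y) t + dist t v := dist_triangle _ _ _
    nlinarith
  refine ⟨part1, ?_⟩
  haveI : CompleteSpace X := hXcl.completeSpace_coe
  set c : ℝ := 1 - α - ε with hc
  have hcpos : 0 < c := by simp only [hc]; linarith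
  set s : Set (↥X × Y) := {p | p.2 ∈ F p.1} with hs
  have hscl : IsClosed s := by
    apply IsSeqClosed.isClosed
    intro w p hw hp
    have hp1 : Tendsto (fun n => ((w n).1 : Y)) atTop (nhds (p.1 : Y)) :=
      (continuous_subtype_val.tendsto _).comp ((continuous_fst.tendsto _).comp hp)
    have hp2 : Tendsto (fun n => (w n).2) atTop (nhds p.2) :=
      (continuous_snd.tendsto _).comp hp
    have hbnd : ∀ n, infDist p.2 (F p.1) ≤
        dist p.2 (w n).2 + α * dist ((w n).1 : Y) (p.1 : Y) := by
      intro n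
      have hED : EMetric.hausdorffEdist (F (w n).1) (F p.1) ≠ ⊤ :=
        hausdorffEdist_ne_top_of_nonempty_of_bounded (hFne _) (hFne _) (hFbdd _) (hFbdd _)
      have e1 : infDist p.2 (F p.1) ≤ infDist (w n).2 (F p.1) + dist p.2 (w n).2 :=
        infDist_le_infDist_add_dist
      have e2 : infDist (w n).2 (F p.1) ≤
          infDist (w n).2 (F (w n).1) + hausdorffDist (F (w n).1) (F p.1) :=
        infDist_le_infDist_add_hausdorffDist hED
      have e3 : infDist (w n).2 (F (w n).1) = 0 := infDist_zero_of_mem (hw n)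
      have e4 : hausdorffDist (F (w n).1) (F p.1) ≤ α * dist ((w n).1 : Y) (p.1 : Y) :=
        hcontr p.1 (w n).1
      linarith
    have hlim : Tendsto (fun n => dist p.2 (w n).2 + α * dist ((w n).1 : Y) (p.1 : Y))
        atTop (nhds 0) := by
      have l1 : Tendsto (fun n => dist p.2 (w n).2) atTop (nhds (dist p.2 p.2)) :=
        tendsto_const_nhds.dist hp2
      have l2 : Tendsto (fun n => dist ((w n).1 : Y) (p.1 : Y)) atTop
          (nhds (dist (p.1 : Y) (p.1 : Y))) := hp1.dist tendsto_const_nhds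
      simpa using l1.add (l2.const_mul α)
    have hzero : infDist p.2 (F p.1) ≤ 0 :=
      ge_of_tendsto hlim (Eventually.of_forall hbnd)
    have : infDist p.2 (F p.1) = 0 := le_antisymm hzero infDist_nonneg
    exact ((hFcl p.1).mem_iff_infDist_zero (hFne p.1)).2 this
  haveI : CompleteSpace s := hscl.completeSpace_coe
  haveI : Nonempty s := by
    obtain ⟨x₀, hx₀⟩ := hX
    obtain ⟨t₀, ht₀⟩ := hFne ⟨x₀, hx₀⟩
    exact ⟨⟨(⟨x₀, hx₀⟩, t₀), ht₀⟩⟩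
  have hfcont : Continuous (fun p : s => dist ((p : ↥X × Y).1 : Y) (p : ↥X × Y).2 / c) := by
    apply Continuous.div_const
    exact Continuous.dist
      (continuous_subtype_val.comp (continuous_fst.comp continuous_subtype_val))
      (continuous_snd.comp continuous_subtype_val)
  obtain ⟨m, hmin⟩ := exists_brondsted_minimal
    (f := fun p : s => dist ((p : ↥X × Y).1 : Y) (p : ↥X × Y).2 / c) hfcont
    (fun p => div_nonneg dist_nonneg hcpos.le)
  set xb : X := (m : ↥X × Y).1 with hxb
  set tb : Y := (m : ↥X × Y).2 with htb
  have htbm : tb ∈ F xb := m.2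
  by_cases hfix : (xb : Y) ∈ F xb
  · exact ⟨xb, hfix⟩
  exfalso
  obtain ⟨z, hzx, v, hv, hineq⟩ := part1 xb hfix tb htbm
  have hzs : ((z, v) : ↥X × Y) ∈ s := hv
  have hle : dist (⟨(z, v), hzs⟩ : s) m ≤
      dist (xb : Y) tb / c - dist ((z : Y)) v / c := by
    have hdist : dist (⟨(z, v), hzs⟩ : s) m =
        max (dist (z : Y) (xb : Y)) (dist v tb) := by
      rw [Subtype.dist_eq, Prod.dist_eq, Subtype.dist_eq]
    rw [hdist, div_sub_div_same, le_div_iff₀ hcpos]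
    have hdrop : (1 - α - ε) * max (dist (xb : Y) (z : Y)) (dist tb v / (α + ε)) ≤
        dist (xb : Y) tb - dist (z : Y) v := hineq
    have hm1 : dist (xb : Y) (z : Y) ≤ max (dist (xb : Y) (z : Y)) (dist tb v / (α + ε)) :=
      le_max_left _ _
    have hm2 : dist tb v ≤ max (dist (xb : Y) (z : Y)) (dist tb v / (α + ε)) := by
      refine le_trans ?_ (le_max_right _ _)
      rw [le_div_iff₀ hαεpos]
      nlinarith [dist_nonneg (x := tb) (y := v)]
    have hmaxnn : 0 ≤ max (dist (xb : Y) (z : Y)) (dist tb v / (α + ε)) :=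
      le_trans dist_nonneg hm1
    have hmle : max (dist (z : Y) (xb : Y)) (dist v tb) ≤
        max (dist (xb : Y) (z : Y)) (dist tb v / (α + ε)) := by
      rw [dist_comm (z : Y) (xb : Y), dist_comm v tb]
      exact max_le hm1 hm2
    nlinarith [hdrop, hmle, hcpos, hmaxnn, hc]
  have := hmin ⟨(z, v), hzs⟩ hle
  apply hzx
  have : ((z, v) : ↥X × Y) = (m : ↥X × Y) := congrArg Subtype.val this
  exact (Prod.ext_iff.1 this).1
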